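/- Let M₁ and M₂ be matchings in a graph whose symmetric difference forms a path (u₀, v₁, u₁, v₂, u₂, …, with (u_{i-1}, v_i) ∈ M₂ and (v_i, u_i) ∈ M₁) along which the edge weights satisfy w_{u_{i-1} v_i} ≥ w_{v_i u_i} for all i. Then every vertex v_i matched in M₁ is also matched in M₂, to a vertex giving edge weight at least that of its M₁-partner. -/
import Mathlib


/-- A set of pairs is a (bipartite) matching if no two of its pairs share a left or a
right endpoint. -/
def IsPartialMatching {L R : Type*} (M : Finset (L × R)) : Prop :=
  ∀ p ∈ M, ∀ q ∈ M, p ≠ q → p.1 ≠ q.1 ∧ p.2 ≠ q.2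

/-- If the symmetric difference of two matchings `M₁`, `M₂` is an alternating path
`u₀, v₁, u₁, v₂, u₂, …` with `(u_{i-1}, v_i) ∈ M₂`, `(v_i, u_i) ∈ M₁` and
`w_{u_{i-1} v_i} ≥ w_{v_i u_i}` for all `i`, then every right vertex matched in `M₁`
is also matched in `M₂`, to a vertex giving edge weight at least that of its
`M₁`-partner. -/
theorem stmt_14 {L R : Type*} [DecidableEq L] [DecidableEq R]
    (w : L → R → ℝ) (M₁ M₂ : Finset (L × R))
    (h₁ : IsPartialMatching M₁) (h₂ : IsPartialMatching M₂)
    (n : ℕ) (u : Fin (n + 1) → L) (v : Fin n → R)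
    (hM₂ : ∀ i : Fin n, (u i.castSucc, v i) ∈ M₂)
    (hM₁ : ∀ i : Fin n, (u i.succ, v i) ∈ M₁)
    (hw : ∀ i : Fin n, w (u i.succ) (v i) ≤ w (u i.castSucc) (v i))
    (hsym : ∀ p : L × R,
        ((p ∈ M₁ ∧ p ∉ M₂) ∨ (p ∈ M₂ ∧ p ∉ M₁)) ↔
          (∃ i : Fin n, p = (u i.castSucc, v i) ∨ p = (u i.succ, v i))) :
    ∀ (a : L) (b : R), (a, b) ∈ M₁ → ∃ a' : L, (a', b) ∈ M₂ ∧ w a b ≤ w a' b := by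
  intro a b hab
  by_cases h : (a, b) ∈ M₂
  · exact ⟨a, h, le_refl _⟩
  · obtain ⟨i, hi⟩ := (hsym (a, b)).mp (Or.inl ⟨hab, h⟩)
    rcases hi with hi | hi <;>
      · obtain ⟨ha, hb⟩ := Prod.mk.injEq .. ▸ hi
        subst ha hb
        exact ⟨u i.castSucc, hM₂ i, by first | exact hw i | exact le_refl _⟩
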